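/- Let X be a set of 3q elements and let C be a collection of m triplets (3-element subsets) of X. Construct the graph G' as follows: its vertices are the elements of X, and for each triplet t ∈ C and each element x ∈ t, the vertices t_x, a^t_x and b^t_x; its edges are, for each triplet t = {x, y, z} ∈ C, the triangle on {t_x, t_y, t_z} (middle triangle), and for each x ∈ t the triangle on {t_x, a^t_x, b^t_x} (inner triangle) and the triangle on {a^t_x, b^t_x, x} (outer triangle). Then C contains an exact cover of X (a subcollection of pairwise disjoint triplets whose union is X) if and only if G' has a spanning subgraph H satisfying the P3-closure with |E(H)| ≥ 9m + 3q. -/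

import Mathlib

open SimpleGraph

/-- A spanning subgraph `H` of `G` *satisfies the `F`-closure* if for every vertex subset `S`
such that `H[S]` is isomorphic to `F`, the induced subgraph `G[S]` is not isomorphic to `F`. -/
def SatisfiesClosure {V W : Type*} (G H : SimpleGraph V) (F : SimpleGraph W) : Prop :=
  ∀ S : Set V, Nonempty ((H.induce S) ≃g F) → ¬ Nonempty ((G.induce S) ≃g F)

/-- The path on three vertices `0 - 1 - 2`. -/
def P3 : SimpleGraph (Fin 3) :=
  SimpleGraph.fromRel (fun a b => (a = 0 ∧ b = 1) ∨ (a = 1 ∧ b = 2))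

/-- The graph `G'` of the reduction from Planar X3C. Its vertices are the elements of
`X = Fin (3*q)` (the vertices `Sum.inl x`), together with, for every triplet `t : Fin m` and
every element `x ∈ C t` (encoded as a subtype pair `p`), the three vertices `t_x = (p, 0)`,
`a^t_x = (p, 1)` and `b^t_x = (p, 2)` (the vertices `Sum.inr (p, j)`). Its edges are, for each
triplet `t = {x, y, z}`, the middle triangle on `{t_x, t_y, t_z}` and, for each `x ∈ t`, the
inner triangle on `{t_x, a^t_x, b^t_x}` and the outer triangle on `{a^t_x, b^t_x, x}`. -/
def xcGraph (q m : ℕ) (C : Fin m → Finset (Fin (3 * q))) :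
    SimpleGraph (Fin (3 * q) ⊕ ({pr : Fin m × Fin (3 * q) // pr.2 ∈ C pr.1} × Fin 3)) :=
  SimpleGraph.fromRel (fun a b =>
    match a, b with
    | Sum.inr (p, j), Sum.inr (p', j') => (p.1.1 = p'.1.1 ∧ j = 0 ∧ j' = 0) ∨ p = p'
    | Sum.inl x, Sum.inr (p, j) => x = p.1.2 ∧ j ≠ 0
    | _, _ => False)

abbrev XCPt (q m : ℕ) (C : Fin m → Finset (Fin (3 * q))) :=
  {pr : Fin m × Fin (3 * q) // pr.2 ∈ C pr.1}

lemma p3_01 : P3.Adj 0 1 := by simp [P3, SimpleGraph.fromRel_adj]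
lemma p3_12 : P3.Adj 1 2 := by simp [P3, SimpleGraph.fromRel_adj]
lemma p3_n02 : ¬ P3.Adj 0 2 := by simp [P3, SimpleGraph.fromRel_adj]

lemma iso_p3_of {V : Type*} (K : SimpleGraph V) {u v w : V}
    (huv : K.Adj u v) (hvw : K.Adj v w) (huw : ¬ K.Adj u w) (hne : u ≠ w) :
    Nonempty ((K.induce {u, v, w}) ≃g P3) := by
  classical
  have huv' : u ≠ v := huv.ne
  have hvw' : v ≠ w := hvw.ne
  have hwu : ¬ K.Adj w u := fun h => huw h.symm
  let e : Fin 3 → ({u, v, w} : Set V) :=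
    ![⟨u, by simp⟩, ⟨v, by simp⟩, ⟨w, by simp⟩]
  let g : ({u, v, w} : Set V) → Fin 3 := fun a => if a.1 = u then 0 else if a.1 = v then 1 else 2
  have hleft : ∀ i, g (e i) = i := by
    intro i
    fin_cases i <;> simp [e, g, huv'.symm, hne.symm, hvw'.symm]
  have hright : ∀ a, e (g a) = a := by
    rintro ⟨a, ha⟩
    rcases ha with rfl | rfl | rfl
    · simp [e, g]
    · simp [e, g, huv'.symm]
    · simp [e, g, hne.symm, hvw'.symm]
  refine ⟨(SimpleGraph.Iso.symm ⟨⟨e, g, hleft, hright⟩, ?_⟩ : _ ≃g P3)⟩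
  intro i j
  fin_cases i <;> fin_cases j <;>
    simp [e, P3, comap_adj, huv, hvw, huw, hwu, huv.symm, hvw.symm] <;>
    decide


/-- a graph that is a disjoint union of cliques has no induced P3, hence satisfies closure. -/
lemma closure_of_clique {V : Type*} {K : SimpleGraph V}
    (h : ∀ a b c : V, K.Adj a b → K.Adj b c → a ≠ c → K.Adj a c) (G : SimpleGraph V) :
    SatisfiesClosure G K P3 := by
  intro S ⟨φ⟩ _
  let ψ := φ.symm
  have h01 : (K.induce S).Adj (ψ 0) (ψ 1) := ψ.map_adj_iff.mpr p3_01
  have h12 : (K.induce S).Adj (ψ 1) (ψ 2) := ψ.map_adj_iff.mpr p3_12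
  have hne : (ψ 0 : S) ≠ ψ 2 := fun h => by
    have := ψ.toEquiv.injective h; simp at this
  have hne' : ((ψ 0 : S) : V) ≠ ((ψ 2 : S) : V) := fun h => hne (Subtype.ext h)
  have : (K.induce S).Adj (ψ 0) (ψ 2) := by
    have := h _ _ _ h01 h12 hne'
    exact this
  have : P3.Adj 0 2 := ψ.map_adj_iff.mp this
  exact absurd this p3_n02

lemma step_lemma {V : Type*} {G K : SimpleGraph V} (hle : K ≤ G)
    (hcl : SatisfiesClosure G K P3) {u v w : V}
    (h1 : K.Adj u v) (h2 : K.Adj v w) (hne : u ≠ w) : G.Adj u w := by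
  by_contra hG
  have hK : ¬ K.Adj u w := fun h => hG (hle h)
  exact hcl {u, v, w} (iso_p3_of K h1 h2 hK hne) (iso_p3_of G (hle h1) (hle h2) hG hne)


section
variable {q m : ℕ} {C : Fin m → Finset (Fin (3 * q))}

lemma adjXX {x y : Fin (3*q)} : ¬ (xcGraph q m C).Adj (Sum.inl x) (Sum.inl y) := by
  simp [xcGraph, fromRel_adj]

lemma adjXR {x : Fin (3*q)} {p : XCPt q m C} {j : Fin 3} :
    (xcGraph q m C).Adj (Sum.inl x) (Sum.inr (p, j)) ↔ x = p.1.2 ∧ j ≠ 0 := by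
  simp [xcGraph, fromRel_adj]

lemma adjRR {p p' : XCPt q m C} {j j' : Fin 3} :
    (xcGraph q m C).Adj (Sum.inr (p, j)) (Sum.inr (p', j')) ↔
      (p, j) ≠ (p', j') ∧ ((p.1.1 = p'.1.1 ∧ j = 0 ∧ j' = 0) ∨ p = p') := by
  simp only [xcGraph, fromRel_adj]
  constructor
  · rintro ⟨hne, h | h⟩
    · refine ⟨fun hh => hne (by rw [hh]), ?_⟩
      rcases h with ⟨h1, h2, h3⟩ | h1
      · exact Or.inl ⟨h1, h2, h3⟩
      · exact Or.inr h1
    · refine ⟨fun hh => hne (by rw [hh]), ?_⟩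
      rcases h with ⟨h1, h2, h3⟩ | h1
      · exact Or.inl ⟨h1.symm, h3, h2⟩
      · exact Or.inr h1.symm
  · rintro ⟨hne, h⟩
    exact ⟨fun hh => hne (by injection hh), Or.inl h⟩

lemma cardV (hC : ∀ i, (C i).card = 3) :
    Fintype.card (Fin (3 * q) ⊕ (XCPt q m C × Fin 3)) = 3 * q + 9 * m := by
  have e : XCPt q m C ≃ Σ t : Fin m, {x // x ∈ C t} :=
    ⟨fun p => ⟨p.1.1, ⟨p.1.2, p.2⟩⟩, fun s => ⟨(s.1, s.2.1), s.2.2⟩,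
      by rintro ⟨⟨t, x⟩, h⟩; rfl, by rintro ⟨t, x, h⟩; rfl⟩
  have hP : Fintype.card (XCPt q m C) = 3 * m := by
    rw [Fintype.card_congr e, Fintype.card_sigma]
    simp only [Fintype.card_coe, hC]
    simp [Finset.sum_const, mul_comm]
  rw [Fintype.card_sum, Fintype.card_prod, Fintype.card_fin, hP, Fintype.card_fin]
  ring


/-- if the first coordinate is not 0, adjacent gadget vertices share the same pair. -/
lemma pEq {p p' : XCPt q m C} {j j' : Fin 3} (h : (xcGraph q m C).Adj (Sum.inr (p, j)) (Sum.inr (p', j')))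
    (hj : j ≠ 0) : p = p' := by
  rcases (adjRR.mp h).2 with ⟨_, h2, _⟩ | h2
  · exact absurd h2 hj
  · exact h2

lemma nadjTX {p : XCPt q m C} {x : Fin (3*q)} : ¬ (xcGraph q m C).Adj (Sum.inr (p, 0)) (Sum.inl x) :=
  fun h => (adjXR.mp h.symm).2 rfl

lemma classX {x : Fin (3*q)} {z} (h : (xcGraph q m C).Adj (Sum.inl x) z) :
    ∃ (p : XCPt q m C) (j : Fin 3), z = Sum.inr (p, j) ∧ p.1.2 = x ∧ j ≠ 0 := by
  match z with
  | Sum.inl y => exact absurd h adjXX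
  | Sum.inr (p, j) =>
      obtain ⟨h1, h2⟩ := adjXR.mp h
      exact ⟨p, j, rfl, h1.symm, h2⟩

lemma classA {p : XCPt q m C} {j : Fin 3} {z} (hj : j ≠ 0)
    (h : (xcGraph q m C).Adj (Sum.inr (p, j)) z) :
    z = Sum.inl p.1.2 ∨ ∃ j' : Fin 3, j' ≠ j ∧ z = Sum.inr (p, j') := by
  match z with
  | Sum.inl y =>
      obtain ⟨h1, _⟩ := adjXR.mp h.symm
      exact Or.inl (by rw [h1])
  | Sum.inr (p', j') =>
      have hp := pEq h hj
      subst hp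
      refine Or.inr ⟨j', ?_, rfl⟩
      have := (adjRR.mp h).1
      intro hc; exact this (by rw [hc])

lemma classT {p : XCPt q m C} {z} (h : (xcGraph q m C).Adj (Sum.inr (p, 0)) z) :
    (z = Sum.inr (p, 1) ∨ z = Sum.inr (p, 2)) ∨
      (∃ p' : XCPt q m C, p' ≠ p ∧ p'.1.1 = p.1.1 ∧ z = Sum.inr (p', 0)) := by
  match z with
  | Sum.inl y => exact absurd h nadjTX
  | Sum.inr (p', j') =>
      have hne := (adjRR.mp h).1
      rcases (adjRR.mp h).2 with ⟨h1, _, h3⟩ | h2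
      · subst h3
        refine Or.inr ⟨p', ?_, h1.symm, rfl⟩
        intro hc; exact hne (by rw [hc])
      · subst h2
        have hj : j' ≠ 0 := fun hc => hne (by rw [hc])
        have fin0 : ∀ w : Fin 3, w ≠ 0 → w = 1 ∨ w = 2 := by decide
        have : j' = 1 ∨ j' = 2 := fin0 j' hj
        rcases this with rfl | rfl
        · exact Or.inl (Or.inl rfl)
        · exact Or.inl (Or.inr rfl)

lemma four_pairs (hC : ∀ i, (C i).card = 3) (p1 p2 p3 p4 : XCPt q m C)
    (h12 : p2.1.1 = p1.1.1) (h13 : p3.1.1 = p1.1.1) (h14 : p4.1.1 = p1.1.1)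
    (n12 : p1 ≠ p2) (n13 : p1 ≠ p3) (n14 : p1 ≠ p4)
    (n23 : p2 ≠ p3) (n24 : p2 ≠ p4) (n34 : p3 ≠ p4) : False := by
  have key : ∀ pa pb : XCPt q m C, pa.1.1 = pb.1.1 → pa.1.2 = pb.1.2 → pa = pb :=
    fun pa pb h1 h2 => Subtype.ext (Prod.ext h1 h2)
  have x12 : p1.1.2 ≠ p2.1.2 := fun h => n12 (key _ _ h12.symm h)
  have x13 : p1.1.2 ≠ p3.1.2 := fun h => n13 (key _ _ h13.symm h)
  have x14 : p1.1.2 ≠ p4.1.2 := fun h => n14 (key _ _ h14.symm h)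
  have x23 : p2.1.2 ≠ p3.1.2 := fun h => n23 (key _ _ (h12.trans h13.symm) h)
  have x24 : p2.1.2 ≠ p4.1.2 := fun h => n24 (key _ _ (h12.trans h14.symm) h)
  have x34 : p3.1.2 ≠ p4.1.2 := fun h => n34 (key _ _ (h13.trans h14.symm) h)
  have hsub : ({p1.1.2, p2.1.2, p3.1.2, p4.1.2} : Finset (Fin (3*q))) ⊆ C p1.1.1 := by
    intro z hz
    simp only [Finset.mem_insert, Finset.mem_singleton] at hz
    rcases hz with rfl | rfl | rfl | rfl
    · exact p1.2
    · exact h12 ▸ p2.2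
    · exact h13 ▸ p3.2
    · exact h14 ▸ p4.2
  have hc4 : ({p1.1.2, p2.1.2, p3.1.2, p4.1.2} : Finset (Fin (3*q))).card = 4 := by
    rw [Finset.card_insert_of_notMem (by simp [x12, x13, x14]),
      Finset.card_insert_of_notMem (by simp [x23, x24]),
      Finset.card_insert_of_notMem (by simp [x34]), Finset.card_singleton]
  have := Finset.card_le_card hsub
  rw [hc4, hC] at this
  omega


lemma forward_dir (hC : ∀ i, (C i).card = 3)
    (h : ∃ S : Finset (Fin m), ∀ x : Fin (3 * q), ∃! i, i ∈ S ∧ x ∈ C i) :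
    ∃ H ≤ xcGraph q m C, SatisfiesClosure (xcGraph q m C) H P3 ∧
      9 * m + 3 * q ≤ H.edgeSet.ncard := by
  classical
  obtain ⟨S, hu⟩ := h
  -- the chosen triplet covering x
  let f : Fin (3 * q) → XCPt q m C := fun x => ⟨((hu x).choose, x), ((hu x).choose_spec.1.2)⟩
  have hfS : ∀ x, (f x).1.1 ∈ S := fun x => (hu x).choose_spec.1.1
  have hfx : ∀ x, (f x).1.2 = x := fun x => rfl
  have huniq : ∀ (x : Fin (3*q)) (i : Fin m), i ∈ S → x ∈ C i → i = (hu x).choose :=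
    fun x i h1 h2 => (hu x).choose_spec.2 i ⟨h1, h2⟩
  -- the label of the triangle containing each vertex
  let lab : (Fin (3 * q) ⊕ (XCPt q m C × Fin 3)) → (Fin m ⊕ (Fin (3*q) ⊕ XCPt q m C)) :=
    fun v => match v with
    | Sum.inl x => Sum.inr (Sum.inl x)
    | Sum.inr (p, j) =>
        if p.1.1 ∈ S then (if j = 0 then Sum.inl p.1.1 else Sum.inr (Sum.inl p.1.2))
        else Sum.inr (Sum.inr p)
  let H : SimpleGraph (Fin (3 * q) ⊕ (XCPt q m C × Fin 3)) :=
    SimpleGraph.fromRel (fun a b => lab a = lab b)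
  have hadj : ∀ a b, H.Adj a b ↔ a ≠ b ∧ lab a = lab b := by
    intro a b
    rw [fromRel_adj]
    constructor
    · rintro ⟨h1, h2 | h2⟩
      exacts [⟨h1, h2⟩, ⟨h1, h2.symm⟩]
    · rintro ⟨h1, h2⟩; exact ⟨h1, Or.inl h2⟩
  have hle : H ≤ xcGraph q m C := by
    intro a b hab
    rw [hadj] at hab
    obtain ⟨hne, hl⟩ := hab
    match a, b with
    | Sum.inl x, Sum.inl y =>
        simp only [lab, Sum.inr.injEq, Sum.inl.injEq] at hl
        exact absurd (by rw [hl]) hne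
    | Sum.inl x, Sum.inr (p, j) =>
        by_cases h1 : p.1.1 ∈ S <;> by_cases h2 : j = 0 <;>
          simp only [lab, h1, h2, if_true, if_false, ite_true, ite_false,
            Sum.inr.injEq, Sum.inl.injEq, reduceCtorEq] at hl
        exact adjXR.mpr ⟨hl, h2⟩
    | Sum.inr (p, j), Sum.inl x =>
        refine SimpleGraph.Adj.symm ?_
        by_cases h1 : p.1.1 ∈ S <;> by_cases h2 : j = 0 <;>
          simp only [lab, h1, h2, if_true, if_false, ite_true, ite_false,
            Sum.inr.injEq, Sum.inl.injEq, reduceCtorEq] at hl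
        exact adjXR.mpr ⟨hl.symm, h2⟩
    | Sum.inr (p, j), Sum.inr (p', j') =>
        have hnepj : (p, j) ≠ (p', j') := fun hh => hne (by rw [hh])
        by_cases h1 : p.1.1 ∈ S <;> by_cases h3 : p'.1.1 ∈ S <;>
          by_cases h2 : j = 0 <;> by_cases h4 : j' = 0 <;>
          simp only [lab, h1, h2, h3, h4, if_true, if_false, ite_true, ite_false,
            Sum.inr.injEq, Sum.inl.injEq, reduceCtorEq] at hl
        all_goals
          first
          | exact adjRR.mpr ⟨hnepj, Or.inl ⟨hl, h2, h4⟩⟩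
          | exact adjRR.mpr ⟨hnepj, Or.inr hl⟩
          | · have ht : p.1.1 = p'.1.1 := by
                rw [huniq p.1.2 p.1.1 h1 p.2, huniq p'.1.2 p'.1.1 h3 p'.2, hl]
              exact adjRR.mpr ⟨hnepj, Or.inr (Subtype.ext (Prod.ext ht hl))⟩
  refine ⟨H, hle, closure_of_clique ?_ _, ?_⟩
  · intro a b c h1 h2 hne
    rw [hadj] at h1 h2 ⊢
    exact ⟨hne, h1.2.trans h2.2⟩
  · -- edge count via an injection v ↦ s(v, nxt v)
    let eqv : ∀ t : Fin m, {x // x ∈ C t} ≃ Fin 3 :=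
      fun t => (C t).equivFin.trans (finCongr (hC t))
    let rots : ∀ t : Fin m, {x // x ∈ C t} → {x // x ∈ C t} :=
      fun t y => (eqv t).symm ((eqv t) y + 1)
    have fin3succ : ∀ a : Fin 3, a + 1 ≠ a := by decide
    have fin3succ2 : ∀ a : Fin 3, a + 1 + 1 ≠ a := by decide
    have hrots1 : ∀ t y, rots t y ≠ y := by
      intro t y h
      apply fin3succ ((eqv t) y)
      have := congrArg (eqv t) h
      simpa [rots] using this
    have hrots2 : ∀ t y, rots t (rots t y) ≠ y := by
      intro t y h
      apply fin3succ2 ((eqv t) y)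
      have := congrArg (eqv t) h
      simpa [rots] using this
    let rot : XCPt q m C → XCPt q m C := fun p =>
      ⟨(p.1.1, (rots p.1.1 ⟨p.1.2, p.2⟩).1), (rots p.1.1 ⟨p.1.2, p.2⟩).2⟩
    have hrott : ∀ p : XCPt q m C, (rot p).1.1 = p.1.1 := fun p => rfl
    have hrot1 : ∀ p : XCPt q m C, rot p ≠ p := by
      intro p h
      have hx : (rots p.1.1 ⟨p.1.2, p.2⟩).1 = p.1.2 := congrArg (fun z => z.1.2) h
      exact hrots1 p.1.1 ⟨p.1.2, p.2⟩ (Subtype.ext hx)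
    have hrot2 : ∀ p : XCPt q m C, rot (rot p) ≠ p := by
      intro p h
      have hx : (rots p.1.1 (rots p.1.1 ⟨p.1.2, p.2⟩)).1 = p.1.2 := congrArg (fun z => z.1.2) h
      exact hrots2 p.1.1 ⟨p.1.2, p.2⟩ (Subtype.ext hx)
    -- the successor map within each triangle
    let nxt : (Fin (3 * q) ⊕ (XCPt q m C × Fin 3)) → (Fin (3 * q) ⊕ (XCPt q m C × Fin 3)) :=
      fun v => match v with
      | Sum.inl x => Sum.inr (f x, 1)
      | Sum.inr (p, j) =>
          if j = 0 then (if p.1.1 ∈ S then Sum.inr (rot p, 0) else Sum.inr (p, 1))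
          else if j = 1 then Sum.inr (p, 2)
          else (if p.1.1 ∈ S then Sum.inl p.1.2 else Sum.inr (p, 0))
    have hnxtadj : ∀ v, H.Adj v (nxt v) := by
      intro v
      rw [hadj]
      match v with
      | Sum.inl x =>
          refine ⟨by simp [nxt], ?_⟩
          simp only [nxt, lab, hfS x, if_true, ite_true]
          have : (1 : Fin 3) ≠ 0 := by decide
          simp [this, hfx x]
      | Sum.inr (p, j) =>
          have h3 : j = 0 ∨ j = 1 ∨ j = 2 := by revert j; decide
          by_cases h1 : p.1.1 ∈ S <;> rcases h3 with rfl | rfl | rfl <;>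
            simp only [nxt, lab, h1, if_true, if_false, ite_true, ite_false, reduceIte] <;>
            constructor
          · simp only [ne_eq, Sum.inr.injEq, Prod.mk.injEq, not_and]
            intro hc; exact absurd hc.symm (hrot1 p)
          · have := hrott p; simp [lab, this, h1]
          · simp
          · simp [lab, h1]
          · simp
          · simp [lab, h1]
          · simp
          · simp [lab, h1]
          · simp
          · simp [lab, h1]
          · simp
          · simp [lab, h1]
    have hnxt2 : ∀ v, nxt (nxt v) ≠ v := by
      intro v
      match v with
      | Sum.inl x => simp [nxt]
      | Sum.inr (p, j) =>
          have h3 : j = 0 ∨ j = 1 ∨ j = 2 := by revert j; decide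
          by_cases h1 : p.1.1 ∈ S <;> rcases h3 with rfl | rfl | rfl
          · have h1' : (rot p).1.1 ∈ S := by rw [hrott p]; exact h1
            simp only [nxt, h1, h1', if_true, ite_true, reduceIte]
            simp only [ne_eq, Sum.inr.injEq, Prod.mk.injEq, not_and]
            intro hc; exact absurd hc (hrot2 p)
          · simp [nxt, h1]
          · simp [nxt, h1]
          · simp [nxt, h1]
          · simp [nxt, h1]
          · simp [nxt, h1]
    classical
    have hinj : Function.Injective (fun v => s(v, nxt v)) := by
      intro a b h
      simp only [Sym2.eq_iff] at h
      rcases h with ⟨h1, _⟩ | ⟨h1, h2⟩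
      · exact h1
      · exact absurd (by rw [h2, ← h1] : nxt (nxt a) = a) (hnxt2 a)
    have hmem : ∀ v, s(v, nxt v) ∈ H.edgeSet := fun v => (H.mem_edgeSet).mpr (hnxtadj v)
    have hcard : Fintype.card (Fin (3 * q) ⊕ (XCPt q m C × Fin 3)) ≤ H.edgeSet.ncard := by
      rw [Set.ncard_eq_toFinset_card']
      rw [← Finset.card_univ]
      apply Finset.card_le_card_of_injOn (fun v => s(v, nxt v))
      · intro v _; simpa using hmem v
      · exact fun x _ y _ h => hinj h
    rw [cardV hC] at hcard
    omega

lemma backward_dir (hC : ∀ i, (C i).card = 3)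
    (h : ∃ H ≤ xcGraph q m C, SatisfiesClosure (xcGraph q m C) H P3 ∧
      9 * m + 3 * q ≤ H.edgeSet.ncard) :
    ∃ S : Finset (Fin m), ∀ x : Fin (3 * q), ∃! i, i ∈ S ∧ x ∈ C i := by
  classical
  obtain ⟨H, hle, hcl, hcard⟩ := h
  set G := xcGraph q m C with hG
  have pairG : ∀ v u w, H.Adj v u → H.Adj v w → u ≠ w → G.Adj u w := by
    intro v u w h1 h2 hne
    by_cases h : H.Adj u w
    · exact hle h
    · exact step_lemma hle hcl h1.symm h2 hne
  -- no vertex has three distinct neighbours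
  have hno3 : ∀ v a b c, H.Adj v a → H.Adj v b → H.Adj v c →
      a ≠ b → a ≠ c → b ≠ c → False := by
    intro v a b c hva hvb hvc hab hac hbc
    have gab := pairG v a b hva hvb hab
    have gac := pairG v a c hva hvc hac
    have gbc := pairG v b c hvb hvc hbc
    match v with
    | Sum.inl x =>
        obtain ⟨pa, ja, rfl, hpa, hja⟩ := classX (hle hva)
        obtain ⟨pb, jb, rfl, hpb, hjb⟩ := classX (hle hvb)
        obtain ⟨pc, jc, rfl, hpc, hjc⟩ := classX (hle hvc)
        have e1 : pa = pb := pEq gab hja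
        have e2 : pa = pc := pEq gac hja
        subst e1; subst e2
        have d1 : ja ≠ jb := fun h => hab (by rw [h])
        have d2 : ja ≠ jc := fun h => hac (by rw [h])
        have d3 : jb ≠ jc := fun h => hbc (by rw [h])
        have fin1 : ∀ a b c : Fin 3, a ≠ 0 → b ≠ 0 → c ≠ 0 → a ≠ b → a ≠ c → b ≠ c → False := by
          decide
        exact fin1 ja jb jc hja hjb hjc d1 d2 d3
    | Sum.inr (p, j) =>
        by_cases hj : j = 0
        · subst hj
          -- classify a b c
          have f1 : ∀ z w, (z = Sum.inr (p, 1) ∨ z = Sum.inr (p, 2)) →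
              (∃ p' : XCPt q m C, p' ≠ p ∧ p'.1.1 = p.1.1 ∧ w = Sum.inr (p', 0)) →
              G.Adj z w → False := by
            rintro z w (rfl | rfl) ⟨p', hp', _, rfl⟩ hzw
            · exact hp' (pEq hzw (by decide)).symm
            · exact hp' (pEq hzw (by decide)).symm
          rcases classT (hle hva) with ha | ha
          · rcases classT (hle hvb) with hb | hb
            · rcases classT (hle hvc) with hc | hc
              · rcases ha with rfl | rfl <;> rcases hb with rfl | rfl <;>
                  rcases hc with rfl | rfl <;>
                  first | exact hab rfl | exact hac rfl | exact hbc rfl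
              · exact f1 a c ha hc gac
            · rcases classT (hle hvc) with hc | hc
              · exact f1 c b hc hb gbc.symm
              · exact f1 a b ha hb gab
          · rcases classT (hle hvb) with hb | hb
            · rcases classT (hle hvc) with hc | hc
              · exact f1 b a hb ha gab.symm
              · exact f1 b a hb ha gab.symm
            · rcases classT (hle hvc) with hc | hc
              · exact f1 c a hc ha gac.symm
              · obtain ⟨pa, npa, ta, rfl⟩ := ha
                obtain ⟨pb, npb, tb, rfl⟩ := hb
                obtain ⟨pc, npc, tc, rfl⟩ := hc
                refine four_pairs hC p pa pb pc ta tb tc ?_ ?_ ?_ ?_ ?_ ?_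
                · exact fun h => npa h.symm
                · exact fun h => npb h.symm
                · exact fun h => npc h.symm
                · exact fun h => hab (by rw [h])
                · exact fun h => hac (by rw [h])
                · exact fun h => hbc (by rw [h])
        · -- j ≠ 0 : neighbours of an inner vertex
          have cls : ∀ z, H.Adj (Sum.inr (p, j)) z →
              z = Sum.inl p.1.2 ∨ ∃ j' : Fin 3, j' ≠ j ∧ z = Sum.inr (p, j') :=
            fun z hz => classA hj (hle hz)
          rcases cls a hva with rfl | ⟨ja, dja, rfl⟩
          · rcases cls b hvb with rfl | ⟨jb, djb, rfl⟩
            · exact hab rfl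
            · rcases cls c hvc with rfl | ⟨jc, djc, rfl⟩
              · exact hac rfl
              · -- a = X, b, c gadget with same p : jb jc ≠ 0 from gab gac, ≠ j, distinct
                have hjb0 : jb ≠ 0 := (adjXR.mp gab).2
                have hjc0 : jc ≠ 0 := (adjXR.mp gac).2
                have d3 : jb ≠ jc := fun h => hbc (by rw [h])
                have fin3 : ∀ j a b : Fin 3, j ≠ 0 → a ≠ 0 → b ≠ 0 → a ≠ j → b ≠ j → a ≠ b → False := by
                  decide
                exact fin3 j jb jc hj hjb0 hjc0 djb djc d3
          · rcases cls b hvb with rfl | ⟨jb, djb, rfl⟩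
            · rcases cls c hvc with rfl | ⟨jc, djc, rfl⟩
              · exact hbc rfl
              · have hja0 : ja ≠ 0 := (adjXR.mp gab.symm).2
                have hjc0 : jc ≠ 0 := (adjXR.mp gbc).2
                have d3 : ja ≠ jc := fun h => hac (by rw [h])
                have fin3 : ∀ j a b : Fin 3, j ≠ 0 → a ≠ 0 → b ≠ 0 → a ≠ j → b ≠ j → a ≠ b → False := by
                  decide
                exact fin3 j ja jc hj hja0 hjc0 dja djc d3
            · rcases cls c hvc with rfl | ⟨jc, djc, rfl⟩
              · have hja0 : ja ≠ 0 := (adjXR.mp gac.symm).2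
                have hjb0 : jb ≠ 0 := (adjXR.mp gbc.symm).2
                have d3 : ja ≠ jb := fun h => hab (by rw [h])
                have fin3 : ∀ j a b : Fin 3, j ≠ 0 → a ≠ 0 → b ≠ 0 → a ≠ j → b ≠ j → a ≠ b → False := by
                  decide
                exact fin3 j ja jb hj hja0 hjb0 dja djb d3
              · have d1 : ja ≠ jb := fun h => hab (by rw [h])
                have d2 : ja ≠ jc := fun h => hac (by rw [h])
                have d3 : jb ≠ jc := fun h => hbc (by rw [h])
                have fin2 : ∀ j a b c : Fin 3, a ≠ j → b ≠ j → c ≠ j → a ≠ b → a ≠ c → b ≠ c → False := by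
                  decide
                exact fin2 j ja jb jc dja djb djc d1 d2 d3
  -- handshake counting: every vertex has degree exactly 2
  have hdeg2 : ∀ v, H.degree v ≤ 2 := by
    intro v
    by_contra hlt
    push_neg at hlt
    obtain ⟨a, b, c, ha, hb, hc, hab, hac, hbc⟩ := Finset.two_lt_card_iff.mp hlt
    exact hno3 v a b c ((H.mem_neighborFinset v a).mp ha) ((H.mem_neighborFinset v b).mp hb)
      ((H.mem_neighborFinset v c).mp hc) hab hac hbc
  have hE : H.edgeSet.ncard = H.edgeFinset.card := by
    rw [← SimpleGraph.coe_edgeFinset, Set.ncard_coe_finset]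
  have hsum : ∑ v, H.degree v = 2 * H.edgeFinset.card := H.sum_degrees_eq_twice_card_edges
  have hcV : Fintype.card (Fin (3 * q) ⊕ (XCPt q m C × Fin 3)) = 3 * q + 9 * m := cardV hC
  have hdegeq : ∀ v, H.degree v = 2 := by
    by_contra hne
    push_neg at hne
    obtain ⟨v0, hv0⟩ := hne
    have hlt : ∑ v, H.degree v < ∑ _v : Fin (3 * q) ⊕ (XCPt q m C × Fin 3), 2 :=
      Finset.sum_lt_sum (fun i _ => hdeg2 i)
        ⟨v0, Finset.mem_univ _, lt_of_le_of_ne (hdeg2 v0) hv0⟩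
    rw [hsum, Finset.sum_const, Finset.card_univ, hcV, smul_eq_mul] at hlt
    rw [hE] at hcard
    omega
  have two_nbrs : ∀ v, ∃ u w, u ≠ w ∧ H.Adj v u ∧ H.Adj v w ∧
      (∀ z, H.Adj v z → z = u ∨ z = w) := by
    intro v
    obtain ⟨u, w, huw, hset⟩ :=
      Finset.card_eq_two.mp ((hdegeq v) : (H.neighborFinset v).card = 2)
    refine ⟨u, w, huw, ?_, ?_, ?_⟩
    · rw [← H.mem_neighborFinset, hset]; simp
    · rw [← H.mem_neighborFinset, hset]; simp
    · intro z hz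
      have := (H.mem_neighborFinset v z).mpr hz
      rw [hset] at this
      simpa using this
  -- the inner a-b edge is always present
  have hAB : ∀ p : XCPt q m C, H.Adj (Sum.inr (p, 1)) (Sum.inr (p, 2)) := by
    intro p
    obtain ⟨u, w, huw, h1, h2, hall⟩ := two_nbrs (Sum.inr (p, 1))
    have fin0 : ∀ w : Fin 3, w ≠ 1 → w = 0 ∨ w = 2 := by decide
    rcases classA (p := p) (by decide) (hle h1) with rfl | ⟨j1, hj1, rfl⟩
    · rcases classA (p := p) (by decide) (hle h2) with rfl | ⟨j2, hj2, rfl⟩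
      · exact absurd rfl huw
      · rcases fin0 j2 hj2 with rfl | rfl
        · exact ((adjXR.mp (pairG _ _ _ h1 h2 huw)).2 rfl).elim
        · exact h2
    · rcases fin0 j1 hj1 with rfl | rfl
      · rcases classA (p := p) (by decide) (hle h2) with rfl | ⟨j2, hj2, rfl⟩
        · exact ((adjXR.mp (pairG _ _ _ h1 h2 huw).symm).2 rfl).elim
        · rcases fin0 j2 hj2 with rfl | rfl
          · exact absurd rfl huw
          · exact h2
      · exact h1
  -- each element vertex is attached to exactly one outer triangle
  have hXnb : ∀ x : Fin (3 * q), ∃ p : XCPt q m C, p.1.2 = x ∧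
      H.Adj (Sum.inl x) (Sum.inr (p, 1)) ∧ H.Adj (Sum.inl x) (Sum.inr (p, 2)) ∧
      (∀ (p' : XCPt q m C) (j : Fin 3), H.Adj (Sum.inl x) (Sum.inr (p', j)) → p' = p) := by
    intro x
    obtain ⟨u, w, huw, h1, h2, hall⟩ := two_nbrs (Sum.inl x)
    obtain ⟨p1, j1, rfl, hx1, hj1⟩ := classX (hle h1)
    obtain ⟨p2, j2, rfl, hx2, hj2⟩ := classX (hle h2)
    have hpe : p1 = p2 := pEq (pairG _ _ _ h1 h2 huw) hj1
    subst hpe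
    have hjne : j1 ≠ j2 := fun h => huw (by rw [h])
    have huniq : ∀ (p' : XCPt q m C) (j : Fin 3),
        H.Adj (Sum.inl x) (Sum.inr (p', j)) → p' = p1 := by
      intro p' j hadj
      rcases hall _ hadj with h | h
      · injection h with h'; injection h' with h1' h2'
      · injection h with h'; injection h' with h1' h2'
    have fin4 : ∀ a b : Fin 3, a ≠ 0 → b ≠ 0 → a ≠ b → (a = 1 ∧ b = 2) ∨ (a = 2 ∧ b = 1) := by
      decide
    rcases fin4 j1 j2 hj1 hj2 hjne with ⟨rfl, rfl⟩ | ⟨rfl, rfl⟩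
    · exact ⟨p1, hx1, h1, h2, huniq⟩
    · exact ⟨p1, hx1, h2, h1, huniq⟩
  -- if the outer triangle is used at p, the middle vertex t_p has no inner neighbours
  have hnT : ∀ (p : XCPt q m C) (x : Fin (3 * q)), p.1.2 = x →
      H.Adj (Sum.inl x) (Sum.inr (p, 1)) → H.Adj (Sum.inl x) (Sum.inr (p, 2)) →
      ¬ H.Adj (Sum.inr (p, 0)) (Sum.inr (p, 1)) ∧ ¬ H.Adj (Sum.inr (p, 0)) (Sum.inr (p, 2)) := by
    intro p x hx h1 h2
    constructor
    · intro hTA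
      exact hno3 (Sum.inr (p, 1)) (Sum.inl x) (Sum.inr (p, 2)) (Sum.inr (p, 0))
        h1.symm (hAB p) hTA.symm (by simp) (by simp) (by simp)
    · intro hTB
      exact hno3 (Sum.inr (p, 2)) (Sum.inl x) (Sum.inr (p, 1)) (Sum.inr (p, 0))
        h2.symm (hAB p).symm hTB.symm (by simp) (by simp) (by simp)
  -- middle-mode : all neighbours of t_p are middle vertices
  have hMid : ∀ p : XCPt q m C, ¬ H.Adj (Sum.inr (p, 0)) (Sum.inr (p, 1)) →
      ¬ H.Adj (Sum.inr (p, 0)) (Sum.inr (p, 2)) →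
      ∀ z, H.Adj (Sum.inr (p, 0)) z →
        ∃ p' : XCPt q m C, p' ≠ p ∧ p'.1.1 = p.1.1 ∧ z = Sum.inr (p', 0) := by
    intro p hn1 hn2 z hz
    rcases classT (hle hz) with (rfl | rfl) | hmid
    · exact absurd hz hn1
    · exact absurd hz hn2
    · exact hmid
  -- propagation along the middle triangle
  have hprop : ∀ p p' : XCPt q m C, H.Adj (Sum.inr (p, 0)) (Sum.inr (p', 0)) →
      ¬ H.Adj (Sum.inr (p', 0)) (Sum.inr (p', 1)) ∧
      ¬ H.Adj (Sum.inr (p', 0)) (Sum.inr (p', 2)) := by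
    intro p p' hTT
    have hpne : p ≠ p' := fun h => hTT.ne (by rw [h])
    constructor
    · intro hTA
      have g := pairG (Sum.inr (p', 0)) _ _ hTT.symm hTA (by simp)
      rcases (adjRR.mp g).2 with ⟨_, _, h0⟩ | h0
      · exact absurd h0 (by decide)
      · exact hpne h0
    · intro hTB
      have g := pairG (Sum.inr (p', 0)) _ _ hTT.symm hTB (by simp)
      rcases (adjRR.mp g).2 with ⟨_, _, h0⟩ | h0
      · exact absurd h0 (by decide)
      · exact hpne h0
  -- if t_s has no inner neighbours then the outer triangle is used at s
  have houter : ∀ s : XCPt q m C, ¬ H.Adj (Sum.inr (s, 0)) (Sum.inr (s, 1)) →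
      H.Adj (Sum.inl s.1.2) (Sum.inr (s, 1)) := by
    intro s hn1
    obtain ⟨u, w, huw, h1, h2, hall⟩ := two_nbrs (Sum.inr (s, 1))
    have fin0 : ∀ w : Fin 3, w ≠ 1 → w = 0 ∨ w = 2 := by decide
    rcases classA (p := s) (by decide) (hle h1) with h1e | ⟨j1, hj1, h1e⟩
    · subst h1e; exact h1.symm
    · rcases fin0 j1 hj1 with rfl | rfl
      · subst h1e; exact absurd h1.symm hn1
      · rcases classA (p := s) (by decide) (hle h2) with h2e | ⟨j2, hj2, h2e⟩
        · subst h2e; exact h2.symm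
        · rcases fin0 j2 hj2 with rfl | rfl
          · subst h2e; exact absurd h2.symm hn1
          · subst h1e; subst h2e; exact absurd rfl huw
  -- the cover
  let f : Fin (3 * q) → XCPt q m C := fun x => (hXnb x).choose
  have hfx : ∀ x, (f x).1.2 = x := fun x => (hXnb x).choose_spec.1
  have hfA : ∀ x, H.Adj (Sum.inl x) (Sum.inr (f x, 1)) := fun x => (hXnb x).choose_spec.2.1
  have hfB : ∀ x, H.Adj (Sum.inl x) (Sum.inr (f x, 2)) := fun x => (hXnb x).choose_spec.2.2.1
  have hfu : ∀ x (p' : XCPt q m C) (j : Fin 3),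
      H.Adj (Sum.inl x) (Sum.inr (p', j)) → p' = f x :=
    fun x => (hXnb x).choose_spec.2.2.2
  refine ⟨Finset.image (fun x => (f x).1.1) Finset.univ, ?_⟩
  intro x
  refine ⟨(f x).1.1, ⟨Finset.mem_image_of_mem _ (Finset.mem_univ x), ?_⟩, ?_⟩
  · have := (f x).2
    rwa [hfx x] at this
  · rintro i ⟨hiS, hxC⟩
    obtain ⟨x', _, hix'⟩ := Finset.mem_image.mp hiS
    subst hix'
    set p' : XCPt q m C := f x' with hp'
    -- t_{p'} is in middle mode
    have hn := hnT p' x' (hfx x') (hfA x') (hfB x')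
    set s : XCPt q m C := ⟨((p' : Fin m × Fin (3*q)).1, x), hxC⟩ with hs
    have hst : s.1.1 = p'.1.1 := rfl
    have hsx : s.1.2 = x := rfl
    by_cases hsp : s = p'
    · -- x = x'
      have : x = p'.1.2 := by rw [← hsx, hsp]
      rw [this, hfx x']
    · -- s is a middle neighbour of t_{p'}
      obtain ⟨u, w, huw, h1, h2, hall⟩ := two_nbrs (Sum.inr (p', 0))
      obtain ⟨r1, hr1ne, hr1t, rfl⟩ := hMid p' hn.1 hn.2 u h1
      obtain ⟨r2, hr2ne, hr2t, rfl⟩ := hMid p' hn.1 hn.2 w h2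
      have hr12 : r1 ≠ r2 := fun h => huw (by rw [h])
      have hTs : H.Adj (Sum.inr (p', 0)) (Sum.inr (s, 0)) := by
        by_cases e1 : s = r1
        · rw [e1]; exact h1
        by_cases e2 : s = r2
        · rw [e2]; exact h2
        exact (four_pairs hC p' r1 r2 s hr1t hr2t hst
          (fun h => hr1ne h.symm) (fun h => hr2ne h.symm) (fun h => hsp h.symm)
          hr12 (fun h => e1 h.symm) (fun h => e2 h.symm)).elim
      have hsn := hprop p' s hTs
      have hout := houter s hsn.1
      rw [hsx] at hout
      have : s = f x := hfu x s 1 hout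
      rw [← this]

end

/-- The collection `C` of triplets of `X = Fin (3*q)` contains an exact cover of `X` iff the
graph `G'` has a spanning subgraph `H` satisfying the `P3`-closure with `|E(H)| ≥ 9m + 3q`. -/
theorem stmt_16 (q m : ℕ) (C : Fin m → Finset (Fin (3 * q)))
    (hC : ∀ i, (C i).card = 3) :
    (∃ S : Finset (Fin m), ∀ x : Fin (3 * q), ∃! i, i ∈ S ∧ x ∈ C i) ↔
    (∃ H ≤ xcGraph q m C, SatisfiesClosure (xcGraph q m C) H P3 ∧
      9 * m + 3 * q ≤ H.edgeSet.ncard) := by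
  constructor
  · exact fun h => forward_dir hC h
  · exact fun h => backward_dir hC h
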